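/- With the setup of the equivalence between GF(2) matrix factorization and binary constrained clustering: given a center set C = {c_0,...,c_{k-1}} satisfying R with clustering cost t, the matrix B whose i-th column is a closest vector in C to the i-th column of A satisfies GF(2)-rank(B) ≤ r and ||A − B||_0 ≤ t. -/
import Mathlib


/-- Number of nonzero entries of a matrix over GF(2). -/
def zeroNorm {m n : ℕ} (M : Matrix (Fin m) (Fin n) (ZMod 2)) : ℕ :=
  (Finset.univ.filter fun p : Fin m × Fin n => M p.1 p.2 ≠ 0).card

theorem stmt8 (m n r : ℕ) (A B : Matrix (Fin m) (Fin n) (ZMod 2))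
    (C : Finset (Fin r) → Fin m → ZMod 2)
    (hC : ∀ i, ∃ x : Fin r → ZMod 2, ∀ S : Finset (Fin r), C S i = ∑ j ∈ S, x j)
    (hB : ∀ l : Fin n, ∃ S : Finset (Fin r), (fun i => B i l) = C S ∧
      ∀ S' : Finset (Fin r),
        hammingDist (fun i => A i l) (C S) ≤ hammingDist (fun i => A i l) (C S')) :
    B.rank ≤ r ∧
      zeroNorm (A - B) ≤
        ∑ l : Fin n, ⨅ S : Finset (Fin r), hammingDist (fun i => A i l) (C S) := by
  constructor
  · -- rank bound: B = X * Y
    set X : Matrix (Fin m) (Fin r) (ZMod 2) := fun i j => (hC i).choose j with hX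
    set Y : Matrix (Fin r) (Fin n) (ZMod 2) :=
      fun j l => if j ∈ (hB l).choose then 1 else 0 with hY
    have hBXY : B = X * Y := by
      ext i l
      have h1 : (fun i => B i l) = C (hB l).choose := (hB l).choose_spec.1
      have h2 := (hC i).choose_spec (hB l).choose
      have h3 : B i l = C (hB l).choose i := congrFun h1 i
      rw [Matrix.mul_apply]
      simp only [hX, hY, mul_ite, mul_one, mul_zero]
      rw [Finset.sum_ite_mem, Finset.univ_inter, h3, h2]
    rw [hBXY]
    calc (X * Y).rank ≤ X.rank := Matrix.rank_mul_le_left X Y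
      _ ≤ r := Matrix.rank_le_width X
  · -- cost bound
    have hsum : zeroNorm (A - B) =
        ∑ l : Fin n, hammingDist (fun i => A i l) (fun i => B i l) := by
      unfold zeroNorm
      rw [Finset.card_filter]
      rw [← Finset.univ_product_univ, Finset.sum_product_right]
      congr 1; ext l
      rw [hammingDist, Finset.card_filter]
      congr 1; ext i
      simp [sub_eq_zero]
    rw [hsum]
    apply Finset.sum_le_sum
    intro l _
    obtain ⟨S, hS, hmin⟩ := hB l
    rw [hS]
    exact le_ciInf fun S' => hmin S'
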